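/- Let m ≠ 0. In the Verma module over sch(1) with conformal weight d and mass m, a singular vector exists if and only if d = p − 3/2 for some p ∈ ℕ = {1,2,...}; in that case the singular vector is unique up to scalar multiple and equals (G² − 2mK)^p w₀. For m = 0, for every value of d the vectors G^p w₀ (p ∈ ℕ) are singular vectors, and every singular vector is a scalar multiple of some G^p w₀. -/

import Mathlib

/-- The centrally extended Schrödinger algebra sch(1) in (1+1)-dimensional spacetime,
represented on a complex vector space `V`, together with the lowest weight (Verma)
structure of conformal weight `d` and mass `m`.  The nonvanishing commutation relations
are `[H,D]=2H, [H,K]=D, [D,K]=2K, [P,G]=M, [H,G]=P, [D,G]=G, [P,D]=P, [P,K]=G`,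
`M` is central, and the Verma module has basis `{G^k K^ℓ w₀}`. -/
structure Sch1Verma (d m : ℂ) (V : Type*) [AddCommGroup V] [Module ℂ V] where
  H : Module.End ℂ V
  P : Module.End ℂ V
  G : Module.End ℂ V
  D : Module.End ℂ V
  K : Module.End ℂ V
  M : Module.End ℂ V
  rel_HD : H * D - D * H = (2 : ℂ) • H
  rel_HK : H * K - K * H = D
  rel_DK : D * K - K * D = (2 : ℂ) • K
  rel_PG : P * G - G * P = M
  rel_HG : H * G - G * H = P
  rel_DG : D * G - G * D = G
  rel_PD : P * D - D * P = P
  rel_PK : P * K - K * P = G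
  rel_HP : H * P = P * H
  rel_HM : H * M = M * H
  rel_PM : P * M = M * P
  rel_GK : G * K = K * G
  rel_GM : G * M = M * G
  rel_DM : D * M = M * D
  rel_KM : K * M = M * K
  /-- the lowest weight vector -/
  w0 : V
  lw_H : H w0 = 0
  lw_P : P w0 = 0
  lw_D : D w0 = (-d) • w0
  lw_M : M w0 = m • w0
  /-- the vectors `G^k K^ℓ w₀` form a basis of the Verma module -/
  pbw_indep : LinearIndependent ℂ (fun i : ℕ × ℕ => (G ^ i.1 * K ^ i.2) w0)
  pbw_span : Submodule.span ℂ (Set.range (fun i : ℕ × ℕ => (G ^ i.1 * K ^ i.2) w0)) = ⊤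

namespace Sch1Verma

variable {d m : ℂ} {V : Type*} [AddCommGroup V] [Module ℂ V]

/-- A singular vector: a `D`-eigenvector which is not a scalar multiple of the lowest
weight vector `w₀` and is annihilated by both `P` and `H`. -/
def IsSingular (ρ : Sch1Verma d m V) (v : V) : Prop :=
  (∃ n : ℂ, ρ.D v = n • v) ∧ (∀ c : ℂ, v ≠ c • ρ.w0) ∧ ρ.P v = 0 ∧ ρ.H v = 0

end Sch1Verma

namespace Sch1Verma

variable {d m : ℂ} {V : Type*} [AddCommGroup V] [Module ℂ V] (ρ : Sch1Verma d m V)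

noncomputable def basis : Module.Basis (ℕ × ℕ) ℂ V :=
  Module.Basis.mk ρ.pbw_indep (by rw [ρ.pbw_span])

lemma basis_apply (i : ℕ × ℕ) : ρ.basis i = (ρ.G ^ i.1 * ρ.K ^ i.2) ρ.w0 :=
  Module.Basis.mk_apply _ _ _

/-- shorthand for basis vectors -/
noncomputable def w (k ℓ : ℕ) : V := ρ.basis (k, ℓ)

lemma w_def (k ℓ : ℕ) : ρ.w k ℓ = (ρ.G ^ k * ρ.K ^ ℓ) ρ.w0 := basis_apply ρ (k, ℓ)

lemma w00 : ρ.w 0 0 = ρ.w0 := by simp [w_def]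

lemma commGK : Commute ρ.G ρ.K := ρ.rel_GK

lemma w_succ_left (k ℓ : ℕ) : ρ.w (k+1) ℓ = ρ.G (ρ.w k ℓ) := by
  rw [w_def, w_def, pow_succ', mul_assoc, Module.End.mul_apply]

lemma w_succ_right (k ℓ : ℕ) : ρ.w k (ℓ+1) = ρ.K (ρ.w k ℓ) := by
  rw [w_def, w_def, ← Module.End.mul_apply, ← mul_assoc, ← (ρ.commGK.pow_left k).eq,
    mul_assoc, ← pow_succ']

-- pointwise commutator relations
lemma DK_apply (x : V) : ρ.D (ρ.K x) = ρ.K (ρ.D x) + (2:ℂ) • ρ.K x := by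
  have h := LinearMap.congr_fun ρ.rel_DK x
  simp only [LinearMap.sub_apply, Module.End.mul_apply, LinearMap.smul_apply] at h
  rw [sub_eq_iff_eq_add] at h; rw [h]; abel

lemma DG_apply (x : V) : ρ.D (ρ.G x) = ρ.G (ρ.D x) + ρ.G x := by
  have h := LinearMap.congr_fun ρ.rel_DG x
  simp only [LinearMap.sub_apply, Module.End.mul_apply] at h
  rw [sub_eq_iff_eq_add] at h; rw [h]; abel

lemma PG_apply (x : V) : ρ.P (ρ.G x) = ρ.G (ρ.P x) + ρ.M x := by
  have h := LinearMap.congr_fun ρ.rel_PG x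
  simp only [LinearMap.sub_apply, Module.End.mul_apply] at h
  rw [sub_eq_iff_eq_add] at h; rw [h]; abel

lemma PK_apply (x : V) : ρ.P (ρ.K x) = ρ.K (ρ.P x) + ρ.G x := by
  have h := LinearMap.congr_fun ρ.rel_PK x
  simp only [LinearMap.sub_apply, Module.End.mul_apply] at h
  rw [sub_eq_iff_eq_add] at h; rw [h]; abel

lemma HG_apply (x : V) : ρ.H (ρ.G x) = ρ.G (ρ.H x) + ρ.P x := by
  have h := LinearMap.congr_fun ρ.rel_HG x
  simp only [LinearMap.sub_apply, Module.End.mul_apply] at h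
  rw [sub_eq_iff_eq_add] at h; rw [h]; abel

lemma HK_apply (x : V) : ρ.H (ρ.K x) = ρ.K (ρ.H x) + ρ.D x := by
  have h := LinearMap.congr_fun ρ.rel_HK x
  simp only [LinearMap.sub_apply, Module.End.mul_apply] at h
  rw [sub_eq_iff_eq_add] at h; rw [h]; abel

lemma MG_apply (x : V) : ρ.M (ρ.G x) = ρ.G (ρ.M x) :=
  (LinearMap.congr_fun ρ.rel_GM x).symm

lemma MK_apply (x : V) : ρ.M (ρ.K x) = ρ.K (ρ.M x) := by
  have h := LinearMap.congr_fun ρ.rel_KM x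
  simpa [Module.End.mul_apply] using h.symm

end Sch1Verma
namespace Sch1Verma

variable {d m : ℂ} {V : Type*} [AddCommGroup V] [Module ℂ V] (ρ : Sch1Verma d m V)

lemma M_w (k ℓ : ℕ) : ρ.M (ρ.w k ℓ) = m • ρ.w k ℓ := by
  induction k with
  | zero =>
    induction ℓ with
    | zero => rw [w00, ρ.lw_M]
    | succ n ih => rw [w_succ_right, MK_apply, ih, map_smul, ← w_succ_right]
  | succ n ih => rw [w_succ_left, MG_apply, ih, map_smul, ← w_succ_left]

lemma D_w (k ℓ : ℕ) : ρ.D (ρ.w k ℓ) = ((k:ℂ) + 2*ℓ - d) • ρ.w k ℓ := by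
  induction k with
  | zero =>
    induction ℓ with
    | zero => rw [w00, ρ.lw_D]; match_scalars; push_cast; ring
    | succ n ih =>
      rw [w_succ_right, DK_apply, ih, map_smul, ← w_succ_right]
      match_scalars; push_cast; ring
  | succ n ih =>
    rw [w_succ_left, DG_apply, ih, map_smul, ← w_succ_left]
    match_scalars; push_cast; ring

lemma P_w0 (ℓ : ℕ) : ρ.P (ρ.w 0 ℓ) = (ℓ:ℂ) • ρ.w 1 (ℓ-1) := by
  induction ℓ with
  | zero => rw [w00, ρ.lw_P]; simp
  | succ n ih =>
    rw [w_succ_right, PK_apply, ih, map_smul, ← w_succ_right]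
    have hG : ρ.G (ρ.w 0 n) = ρ.w 1 n := (ρ.w_succ_left 0 n).symm
    rw [hG]
    cases n with
    | zero => simp
    | succ s =>
      have : s + 1 - 1 + 1 = s + 1 := rfl
      rw [this, Nat.add_sub_cancel]
      match_scalars; push_cast; ring

lemma P_w (k ℓ : ℕ) :
    ρ.P (ρ.w k ℓ) = ((k:ℂ)*m) • ρ.w (k-1) ℓ + (ℓ:ℂ) • ρ.w (k+1) (ℓ-1) := by
  induction k with
  | zero => rw [P_w0]; simp
  | succ n ih =>
    rw [w_succ_left, PG_apply, ih, M_w, map_add, map_smul, map_smul,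
      ← w_succ_left, ← w_succ_left]
    cases n with
    | zero => simp; abel
    | succ s =>
      rw [Nat.add_sub_cancel, Nat.succ_sub_one]
      match_scalars <;> push_cast <;> ring

lemma H_w0 (ℓ : ℕ) : ρ.H (ρ.w 0 ℓ) = ((ℓ:ℂ)*((ℓ:ℂ)-1-d)) • ρ.w 0 (ℓ-1) := by
  induction ℓ with
  | zero => rw [w00, ρ.lw_H]; simp
  | succ n ih =>
    rw [w_succ_right, HK_apply, ih, D_w, map_smul, ← w_succ_right]
    cases n with
    | zero => simp
    | succ s =>
      have h1 : s + 1 - 1 + 1 = s + 1 := rfl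
      rw [h1, Nat.add_sub_cancel]
      match_scalars <;> push_cast <;> ring

lemma H_w (k ℓ : ℕ) :
    ρ.H (ρ.w k ℓ) = ((ℓ:ℂ)*((ℓ:ℂ)-1-d+k)) • ρ.w k (ℓ-1)
      + ((k:ℂ)*((k:ℂ)-1)/2*m) • ρ.w (k-2) ℓ := by
  induction k with
  | zero => rw [H_w0]; simp
  | succ n ih =>
    rw [w_succ_left, HG_apply, ih, P_w, map_add, map_smul, map_smul,
      ← w_succ_left, ← w_succ_left]
    cases n with
    | zero => simp; match_scalars <;> push_cast <;> ring
    | succ s =>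
      cases s with
      | zero => simp; match_scalars <;> push_cast <;> ring
      | succ t =>
        have h1 : t + 2 - 2 + 1 = t + 1 := by omega
        have h2 : t + 2 - 1 = t + 1 := by omega
        have h3 : t + 1 + 1 + 1 - 2 = t + 1 := by omega
        rw [Nat.add_sub_cancel, h1, h3]
        match_scalars <;> push_cast <;> ring

end Sch1Verma
namespace Sch1Verma

variable {d m : ℂ} {V : Type*} [AddCommGroup V] [Module ℂ V] (ρ : Sch1Verma d m V)

lemma basis_eq_w (i : ℕ × ℕ) : ρ.basis i = ρ.w i.1 i.2 := rfl

lemma repr_w (k ℓ : ℕ) : ρ.basis.repr (ρ.w k ℓ) = Finsupp.single (k, ℓ) 1 :=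
  ρ.basis.repr_self _

lemma repr_end_apply (T : Module.End ℂ V) (v : V) (j : ℕ × ℕ) :
    ρ.basis.repr (T v) j
      = (ρ.basis.repr v).sum (fun i a => a * ρ.basis.repr (T (ρ.basis i)) j) := by
  have h : T v = (ρ.basis.repr v).sum (fun i a => a • T (ρ.basis i)) := by
    conv_lhs => rw [← ρ.basis.linearCombination_repr v, Finsupp.linearCombination_apply, map_finsuppSum]
    simp [map_smul]
  rw [h, map_finsuppSum, Finsupp.sum_apply]
  apply Finsupp.sum_congr
  intro i _
  simp

lemma sum_single_eval (c : (ℕ × ℕ) →₀ ℂ) (f : ℕ × ℕ → ℂ) (t : ℕ × ℕ → ℕ × ℕ)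
    (j j₀ : ℕ × ℕ) (hker : ∀ i, t i = j → f i ≠ 0 → i = j₀) :
    (c.sum fun i a => a * (f i * (if t i = j then 1 else 0)))
      = c j₀ * (f j₀ * (if t j₀ = j then 1 else 0)) := by
  apply Finsupp.sum_eq_single
  · intro i hi hne
    by_cases ht : t i = j
    · by_cases hf : f i = 0
      · simp [hf]
      · exact absurd (hker i ht hf) hne
    · simp [ht]
  · intro _; simp

lemma repr_D_w (k ℓ : ℕ) :
    ρ.basis.repr (ρ.D (ρ.w k ℓ)) = ((k:ℂ) + 2*ℓ - d) • Finsupp.single (k, ℓ) 1 := by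
  rw [D_w, map_smul, repr_w]

lemma repr_P_w (k ℓ : ℕ) :
    ρ.basis.repr (ρ.P (ρ.w k ℓ))
      = ((k:ℂ)*m) • Finsupp.single (k-1, ℓ) 1 + (ℓ:ℂ) • Finsupp.single (k+1, ℓ-1) 1 := by
  rw [P_w, map_add, map_smul, map_smul, repr_w, repr_w]

lemma repr_H_w (k ℓ : ℕ) :
    ρ.basis.repr (ρ.H (ρ.w k ℓ))
      = ((ℓ:ℂ)*((ℓ:ℂ)-1-d+k)) • Finsupp.single (k, ℓ-1) 1
        + ((k:ℂ)*((k:ℂ)-1)/2*m) • Finsupp.single (k-2, ℓ) 1 := by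
  rw [H_w, map_add, map_smul, map_smul, repr_w, repr_w]

/-- the relation coming from `D v = n • v`. -/
lemma D_rel {v : V} {n : ℂ} (hD : ρ.D v = n • v) (j : ℕ × ℕ)
    (hj : ρ.basis.repr v j ≠ 0) : ((j.1 : ℂ) + 2*j.2 - d) = n := by
  have h0 := ρ.repr_end_apply ρ.D v j
  rw [hD, map_smul, Finsupp.smul_apply, smul_eq_mul] at h0
  have hs : (ρ.basis.repr v).sum
      (fun i a => a * ρ.basis.repr (ρ.D (ρ.basis i)) j)
      = (ρ.basis.repr v).sum
        (fun i a => a * (((i.1:ℂ) + 2*i.2 - d) * (if id i = j then 1 else 0))) := by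
    apply Finsupp.sum_congr
    intro i _
    rw [basis_eq_w, repr_D_w]
    simp only [id_eq, Finsupp.smul_apply, Finsupp.single_apply, smul_eq_mul, mul_one]
  rw [hs, sum_single_eval _ _ id j j (fun i hi _ => hi)] at h0
  simp only [id, if_pos, if_true, mul_one] at h0
  refine mul_left_cancel₀ hj ?_
  rw [← h0]; ring

/-- the relation `m * c (1, y) = 0` coming from `P v = 0`. -/
lemma P_rel1 {v : V} (hP : ρ.P v = 0) (y : ℕ) :
    m * ρ.basis.repr v (1, y) = 0 := by
  have h0 := ρ.repr_end_apply ρ.P v (0, y)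
  rw [hP, map_zero, Finsupp.coe_zero, Pi.zero_apply] at h0
  have hs : (ρ.basis.repr v).sum
      (fun i a => a * ρ.basis.repr (ρ.P (ρ.basis i)) (0, y))
      = (ρ.basis.repr v).sum
          (fun i a => a * (((i.1:ℂ)*m) * (if ((i.1-1, i.2) : ℕ × ℕ) = (0,y) then 1 else 0)))
        + (ρ.basis.repr v).sum
          (fun i a => a * ((i.2:ℂ) * (if ((i.1+1, i.2-1) : ℕ × ℕ) = (0,y) then 1 else 0))) := by
    rw [← Finsupp.sum_add]
    apply Finsupp.sum_congr
    intro i _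
    rw [basis_eq_w, repr_P_w]
    simp only [Finsupp.add_apply, Finsupp.smul_apply, Finsupp.single_apply, smul_eq_mul,
      mul_one, mul_add]
  rw [hs] at h0
  rw [sum_single_eval _ _ _ _ ((1, y) : ℕ × ℕ) ?k1, sum_single_eval _ _ _ _ ((0, 0) : ℕ × ℕ) ?k2] at h0
  case k1 =>
    intro i hi hf
    obtain ⟨i1, i2⟩ := i
    simp only [Prod.mk.injEq] at hi ⊢
    have : i1 ≠ 0 := by
      intro h; apply hf; simp [h]
    exact ⟨by omega, hi.2⟩
  case k2 =>
    intro i hi hf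
    obtain ⟨i1, i2⟩ := i
    simp only [Prod.mk.injEq] at hi
    omega
  · simp only [Prod.mk.injEq] at h0
    norm_num at h0
    rcases h0 with h | h <;> simp [h]

/-- the relation `(x+2) m c(x+2,y) + (y+1) c(x,y+1) = 0` coming from `P v = 0`. -/
lemma P_rel2 {v : V} (hP : ρ.P v = 0) (x y : ℕ) :
    ((x:ℂ)+2)*m * ρ.basis.repr v (x+2, y) + ((y:ℂ)+1) * ρ.basis.repr v (x, y+1) = 0 := by
  have h0 := ρ.repr_end_apply ρ.P v (x+1, y)
  rw [hP, map_zero, Finsupp.coe_zero, Pi.zero_apply] at h0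
  have hs : (ρ.basis.repr v).sum
      (fun i a => a * ρ.basis.repr (ρ.P (ρ.basis i)) (x+1, y))
      = (ρ.basis.repr v).sum
          (fun i a => a * (((i.1:ℂ)*m) * (if ((i.1-1, i.2) : ℕ × ℕ) = (x+1,y) then 1 else 0)))
        + (ρ.basis.repr v).sum
          (fun i a => a * ((i.2:ℂ) * (if ((i.1+1, i.2-1) : ℕ × ℕ) = (x+1,y) then 1 else 0))) := by
    rw [← Finsupp.sum_add]
    apply Finsupp.sum_congr
    intro i _
    rw [basis_eq_w, repr_P_w]
    simp only [Finsupp.add_apply, Finsupp.smul_apply, Finsupp.single_apply, smul_eq_mul,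
      mul_one, mul_add]
  rw [hs] at h0
  rw [sum_single_eval _ _ _ _ ((x+2, y) : ℕ × ℕ) ?k1,
    sum_single_eval _ _ _ _ ((x, y+1) : ℕ × ℕ) ?k2] at h0
  case k1 =>
    intro i hi hf
    obtain ⟨i1, i2⟩ := i
    simp only [Prod.mk.injEq] at hi ⊢
    have : i1 ≠ 0 := by intro h; apply hf; simp [h]
    exact ⟨by omega, hi.2⟩
  case k2 =>
    intro i hi hf
    obtain ⟨i1, i2⟩ := i
    simp only [Prod.mk.injEq] at hi ⊢
    have : i2 ≠ 0 := by intro h; apply hf; simp [h]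
    exact ⟨by omega, by omega⟩
  · simp only [Prod.mk.injEq] at h0
    norm_num at h0
    linear_combination -h0

/-- the relation coming from `H v = 0`. -/
lemma H_rel {v : V} (hH : ρ.H v = 0) (x y : ℕ) :
    ((y:ℂ)+1)*((y:ℂ)-d+x) * ρ.basis.repr v (x, y+1)
      + ((x:ℂ)+2)*((x:ℂ)+1)/2*m * ρ.basis.repr v (x+2, y) = 0 := by
  have h0 := ρ.repr_end_apply ρ.H v (x, y)
  rw [hH, map_zero, Finsupp.coe_zero, Pi.zero_apply] at h0
  have hs : (ρ.basis.repr v).sum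
      (fun i a => a * ρ.basis.repr (ρ.H (ρ.basis i)) (x, y))
      = (ρ.basis.repr v).sum
          (fun i a => a * (((i.2:ℂ)*((i.2:ℂ)-1-d+i.1)) * (if ((i.1, i.2-1) : ℕ × ℕ) = (x,y) then 1 else 0)))
        + (ρ.basis.repr v).sum
          (fun i a => a * (((i.1:ℂ)*((i.1:ℂ)-1)/2*m) * (if ((i.1-2, i.2) : ℕ × ℕ) = (x,y) then 1 else 0))) := by
    rw [← Finsupp.sum_add]
    apply Finsupp.sum_congr
    intro i _
    rw [basis_eq_w, repr_H_w]
    simp only [Finsupp.add_apply, Finsupp.smul_apply, Finsupp.single_apply, smul_eq_mul,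
      mul_one, mul_add]
  rw [hs] at h0
  rw [sum_single_eval _ _ _ _ ((x, y+1) : ℕ × ℕ) ?k1,
    sum_single_eval _ _ _ _ ((x+2, y) : ℕ × ℕ) ?k2] at h0
  case k1 =>
    intro i hi hf
    obtain ⟨i1, i2⟩ := i
    simp only [Prod.mk.injEq] at hi ⊢
    have : i2 ≠ 0 := by intro h; apply hf; simp [h]
    exact ⟨hi.1, by omega⟩
  case k2 =>
    intro i hi hf
    obtain ⟨i1, i2⟩ := i
    simp only [Prod.mk.injEq] at hi ⊢
    have h1 : (i1:ℂ) ≠ 0 := by intro h; apply hf; simp [h]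
    have h2 : (i1:ℂ) - 1 ≠ 0 := by intro h; apply hf; rw [sub_eq_zero] at h; simp [h]
    have h1' : i1 ≠ 0 := by intro h; apply h1; simp [h]
    have h2' : i1 ≠ 1 := by intro h; apply h2; simp [h]
    exact ⟨by omega, hi.2⟩
  · simp only [Prod.mk.injEq] at h0
    norm_num at h0
    linear_combination -h0

end Sch1Verma
namespace Sch1Verma

/-- the coefficient recursion solution -/
noncomputable def sfun (m : ℂ) : ℕ → ℕ → ℂ
  | _, 0 => 1
  | x, (y+1) => (-((x:ℂ)+2) * m / ((y:ℂ)+1)) * sfun m (x+2) y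

lemma sfun_zero (m : ℂ) (x : ℕ) : sfun m x 0 = 1 := rfl

lemma sfun_succ (m : ℂ) (x y : ℕ) :
    sfun m x (y+1) = (-((x:ℂ)+2) * m / ((y:ℂ)+1)) * sfun m (x+2) y := rfl

lemma sfun_ne_zero {m : ℂ} (hm : m ≠ 0) (x y : ℕ) : sfun m x y ≠ 0 := by
  induction y generalizing x with
  | zero => rw [sfun_zero]; exact one_ne_zero
  | succ n ih =>
    rw [sfun_succ]
    refine mul_ne_zero (div_ne_zero (mul_ne_zero ?_ hm) (Nat.cast_add_one_ne_zero n)) (ih (x+2))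
    have h2 : (((x+2 : ℕ)):ℂ) ≠ 0 := Nat.cast_ne_zero.mpr (by omega)
    push_cast at h2
    exact neg_ne_zero.mpr h2

variable {d m : ℂ} {V : Type*} [AddCommGroup V] [Module ℂ V] (ρ : Sch1Verma d m V)

lemma repr_ne_zero {v : V} (hv : ρ.IsSingular v) : ρ.basis.repr v ≠ 0 := by
  intro h
  have hv0 : v = 0 := ρ.basis.repr.map_eq_zero_iff.mp h
  exact hv.2.1 0 (by rw [hv0, zero_smul])

lemma level {v : V} (hv : ρ.IsSingular v) :
    ∃ N : ℕ, ∀ j : ℕ × ℕ, ρ.basis.repr v j ≠ 0 → j.1 + 2*j.2 = N := by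
  obtain ⟨n, hD⟩ := hv.1
  by_cases hex : ∃ j, ρ.basis.repr v j ≠ 0
  · obtain ⟨j₀, hj₀⟩ := hex
    refine ⟨j₀.1 + 2*j₀.2, fun j hj => ?_⟩
    have h1 := ρ.D_rel hD j hj
    have h2 := ρ.D_rel hD j₀ hj₀
    have h3 : ((j.1:ℂ) + 2*j.2) = ((j₀.1:ℂ) + 2*j₀.2) := by linear_combination h1 - h2
    exact_mod_cast h3
  · exact ⟨0, fun j hj => absurd ⟨j, hj⟩ hex⟩

lemma c_eq_sfun {v : V} (hP : ρ.P v = 0) :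
    ∀ y x, ρ.basis.repr v (x, y) = sfun m x y * ρ.basis.repr v (x + 2*y, 0) := by
  intro y
  induction y with
  | zero => intro x; simp [sfun_zero]
  | succ n ih =>
    intro x
    have hrel := ρ.P_rel2 hP x n
    have hn : ((n:ℂ)+1) ≠ 0 := Nat.cast_add_one_ne_zero n
    have hx : ((n:ℂ)+1) * ρ.basis.repr v (x, n+1)
        = -((x:ℂ)+2) * m * ρ.basis.repr v (x+2, n) := by linear_combination hrel
    have harith : x + 2 + 2*n = x + 2*(n+1) := by omega
    have ih2 := ih (x+2)
    rw [harith] at ih2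
    rw [sfun_succ]
    apply mul_left_cancel₀ hn
    rw [hx, ih2]
    field_simp

lemma eq_smul_of_single {v : V} (j₀ : ℕ × ℕ)
    (h : ∀ j, j ≠ j₀ → ρ.basis.repr v j = 0) :
    v = ρ.basis.repr v j₀ • ρ.w j₀.1 j₀.2 := by
  apply ρ.basis.repr.injective
  rw [map_smul, repr_w, Finsupp.smul_single, smul_eq_mul, mul_one]
  ext j
  by_cases hj : j = j₀
  · subst hj; simp [Finsupp.single_apply]
  · rw [h j hj, Finsupp.single_apply, if_neg (fun hh => hj hh.symm)]

/-- classification, massless case -/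
lemma singular_m0 (hm : m = 0) {v : V} (hv : ρ.IsSingular v) :
    ∃ p : ℕ, 1 ≤ p ∧ ∃ c : ℂ, v = c • (ρ.G ^ p) ρ.w0 := by
  subst hm
  obtain ⟨N, hN⟩ := ρ.level hv
  have hrow : ∀ x y : ℕ, ρ.basis.repr v (x, y+1) = 0 := by
    intro x y
    have hrel := ρ.P_rel2 hv.2.2.1 x y
    have hy : ((y:ℂ)+1) ≠ 0 := Nat.cast_add_one_ne_zero y
    have h2 : ((y:ℂ)+1) * ρ.basis.repr v (x, y+1) = 0 := by linear_combination hrel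
    exact (mul_eq_zero.mp h2).resolve_left hy
  have hz : ∀ j : ℕ × ℕ, j ≠ (N, 0) → ρ.basis.repr v j = 0 := by
    rintro ⟨j1, j2⟩ hj
    cases j2 with
    | zero =>
      by_contra h
      apply hj
      have hk := hN _ h
      simp only at hk
      have hj1 : j1 = N := by omega
      rw [hj1]
    | succ y => exact hrow j1 y
  have hv' : v = ρ.basis.repr v (N, 0) • ρ.w N 0 := ρ.eq_smul_of_single (N, 0) hz
  have hN1 : 1 ≤ N := by
    by_contra h
    have hN0 : N = 0 := by omega
    refine hv.2.1 (ρ.basis.repr v (N, 0)) ?_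
    conv_lhs => rw [hv']
    rw [hN0, ρ.w00]
  refine ⟨N, hN1, ρ.basis.repr v (N, 0), ?_⟩
  conv_lhs => rw [hv']
  congr 1
  rw [w_def]
  simp

/-- existence, massless case -/
lemma singular_Gp (hm : m = 0) (p : ℕ) (hp : 1 ≤ p) : ρ.IsSingular ((ρ.G ^ p) ρ.w0) := by
  subst hm
  have hw : (ρ.G ^ p) ρ.w0 = ρ.w p 0 := by rw [w_def]; simp
  rw [hw]
  refine ⟨⟨(p:ℂ) - d, ?_⟩, ?_, ?_, ?_⟩
  · rw [D_w]; congr 1; push_cast; ring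
  · intro c hc
    have h := congrArg (fun u => ρ.basis.repr u (p, 0)) hc
    rw [show ρ.w0 = ρ.w 0 0 from ρ.w00.symm] at h
    simp only [map_smul, repr_w, Finsupp.smul_apply, Finsupp.single_apply, smul_eq_mul] at h
    have h1 : ¬((0,0) : ℕ × ℕ) = (p, 0) := by
      intro hh
      have := congrArg Prod.fst hh
      simp only at this
      omega
    rw [if_neg h1, mul_zero] at h
    simp at h
  · rw [P_w]; simp
  · rw [H_w]; simp

/-- classification, massive case -/
lemma singular_mne (hm : m ≠ 0) {v : V} (hv : ρ.IsSingular v) :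
    ∃ p : ℕ, 1 ≤ p ∧ d = (p:ℂ) - 3/2 ∧ ρ.basis.repr v (2*p, 0) ≠ 0 ∧
      (∀ j : ℕ × ℕ, j.1 + 2*j.2 = 2*p →
          ρ.basis.repr v j = sfun m j.1 j.2 * ρ.basis.repr v (2*p, 0)) ∧
      (∀ j : ℕ × ℕ, j.1 + 2*j.2 ≠ 2*p → ρ.basis.repr v j = 0) := by
  obtain ⟨N, hN⟩ := ρ.level hv
  have crec := ρ.c_eq_sfun hv.2.2.1
  have row0 : ∀ k : ℕ, k ≠ N → ρ.basis.repr v (k, 0) = 0 := by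
    intro k hk
    by_contra h
    exact hk (by have := hN _ h; simpa using this)
  have czero : ∀ j : ℕ × ℕ, j.1 + 2*j.2 ≠ N → ρ.basis.repr v j = 0 := by
    rintro ⟨j1, j2⟩ hj
    rw [crec j2 j1, row0 _ (by simpa using hj), mul_zero]
  have hex : ∃ j : ℕ × ℕ, ρ.basis.repr v j ≠ 0 := by
    by_contra h
    push_neg at h
    exact ρ.repr_ne_zero hv (Finsupp.ext fun j => h j)
  have hNne : ρ.basis.repr v (N, 0) ≠ 0 := by
    obtain ⟨⟨j1, j2⟩, hj⟩ := hex
    have hlev : j1 + 2*j2 = N := by have := hN _ hj; simpa using this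
    rw [crec j2 j1, hlev] at hj
    intro h0
    rw [h0, mul_zero] at hj
    exact hj rfl
  have heven : ∃ p : ℕ, N = 2*p := by
    rcases Nat.even_or_odd N with ⟨t, ht⟩ | ⟨t, ht⟩
    · exact ⟨t, by omega⟩
    · exfalso
      have h1t : (1 : ℕ) + 2*t = N := by omega
      have hc1 : ρ.basis.repr v (1, t) ≠ 0 := by
        rw [crec t 1, h1t]
        exact mul_ne_zero (sfun_ne_zero hm 1 t) hNne
      rcases mul_eq_zero.mp (ρ.P_rel1 hv.2.2.1 t) with h | h
      · exact hm h
      · exact hc1 h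
  obtain ⟨p, rfl⟩ := heven
  have hp1 : 1 ≤ p := by
    by_contra h
    have hp0 : p = 0 := by omega
    have hz : ∀ j : ℕ × ℕ, j ≠ (2*p, 0) → ρ.basis.repr v j = 0 := by
      rintro ⟨j1, j2⟩ hj
      apply czero
      simp only [hp0, Nat.mul_zero] at hj ⊢
      intro hc
      apply hj
      have : j1 = 0 ∧ j2 = 0 := by omega
      rw [this.1, this.2]
    refine hv.2.1 (ρ.basis.repr v (2*p, 0)) ?_
    conv_lhs => rw [ρ.eq_smul_of_single (2*p, 0) hz]
    congr 1
    show ρ.w (2*p) 0 = ρ.w0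
    rw [hp0, Nat.mul_zero, ρ.w00]
  obtain ⟨q, rfl⟩ : ∃ q, p = q + 1 := ⟨p - 1, by omega⟩
  have hc0p : ρ.basis.repr v (0, q+1) ≠ 0 := by
    have hc := crec (q+1) 0
    rw [show 0 + 2*(q+1) = 2*(q+1) by omega] at hc
    rw [hc]
    exact mul_ne_zero (sfun_ne_zero hm 0 (q+1)) hNne
  have hP2 := ρ.P_rel2 hv.2.2.1 0 q
  have hH := ρ.H_rel hv.2.2.2 0 q
  have key : (((q:ℂ)) - d - 1/2) * (((q:ℂ)+1) * ρ.basis.repr v (0, q+1)) = 0 := by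
    push_cast at hP2 hH ⊢
    linear_combination hH - (1/2) * hP2
  have hd : d = ((q:ℂ)+1) - 3/2 := by
    rcases mul_eq_zero.mp key with h | h
    · linear_combination -h
    · exact absurd (mul_eq_zero.mp h)
        (by push_neg; exact ⟨Nat.cast_add_one_ne_zero q, hc0p⟩)
  refine ⟨q+1, by omega, by push_cast; linear_combination hd, hNne, ?_, czero⟩
  rintro ⟨j1, j2⟩ hj
  have hc := crec j2 j1
  simp only at hj
  rw [hc, hj]

end Sch1Verma
namespace Sch1Verma

variable {d m : ℂ} {V : Type*} [AddCommGroup V] [Module ℂ V] (ρ : Sch1Verma d m V)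

/-- binomial coefficients of `(G² - 2mK)^p` -/
noncomputable def coef (m : ℂ) (p k : ℕ) : ℂ := ((p.choose k : ℕ) : ℂ) * (-(2*m))^(p-k)

lemma u_eq (p : ℕ) :
    ((ρ.G * ρ.G - (2*m) • ρ.K) ^ p) ρ.w0
      = ∑ k ∈ Finset.range (p+1), coef m p k • ρ.w (2*k) (p-k) := by
  have hc : Commute (ρ.G * ρ.G) (-((2*m) • ρ.K)) :=
    ((ρ.commGK.mul_left ρ.commGK).smul_right (2*m)).neg_right
  rw [sub_eq_add_neg, hc.add_pow, LinearMap.sum_apply]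
  refine Finset.sum_congr rfl fun k _ => ?_
  rw [← neg_smul, smul_pow, show ρ.G * ρ.G = ρ.G^2 from (sq ρ.G).symm, ← pow_mul]
  rw [Module.End.mul_apply, Module.End.mul_apply, Module.End.natCast_apply]
  rw [w_def, Module.End.mul_apply]
  simp only [LinearMap.smul_apply, map_smul, map_nsmul, coef]
  rw [← Nat.cast_smul_eq_nsmul ℂ]
  rw [smul_smul]

lemma repr_u_top (p : ℕ) :
    ρ.basis.repr (((ρ.G * ρ.G - (2*m) • ρ.K) ^ p) ρ.w0) (2*p, 0) = 1 := by
  rw [u_eq, map_sum, Finset.sum_apply']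
  rw [Finset.sum_eq_single p]
  · rw [map_smul, repr_w, Finsupp.smul_apply, Finsupp.single_apply, Nat.sub_self,
      if_pos rfl, smul_eq_mul, mul_one, coef, Nat.choose_self, Nat.sub_self]
    simp
  · intro k hk hkp
    rw [map_smul, repr_w, Finsupp.smul_apply, Finsupp.single_apply,
      if_neg (by simp only [Prod.mk.injEq]; intro ⟨h1, _⟩; exact hkp (by omega)),
      smul_eq_mul, mul_zero]
  · intro h
    exact absurd (Finset.self_mem_range_succ p) h

lemma Pu_zero (p : ℕ) :
    ρ.P (∑ k ∈ Finset.range (p+1), coef m p k • ρ.w (2*k) (p-k)) = 0 := by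
  rw [map_sum]
  have hterm : ∀ k, ρ.P (coef m p k • ρ.w (2*k) (p-k))
      = (2*(k:ℂ) * m * coef m p k) • ρ.w (2*k-1) (p-k)
        + (((p-k : ℕ):ℂ) * coef m p k) • ρ.w (2*k+1) (p-k-1) := by
    intro k
    rw [map_smul, P_w, smul_add, smul_smul, smul_smul]
    match_scalars <;> push_cast <;> ring
  rw [Finset.sum_congr rfl fun k _ => hterm k, Finset.sum_add_distrib,
    Finset.sum_range_succ' (fun k => (2*(k:ℂ)*m*coef m p k) • ρ.w (2*k-1) (p-k)) p,
    Finset.sum_range_succ (fun k => (((p-k:ℕ):ℂ)*coef m p k) • ρ.w (2*k+1) (p-k-1)) p]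
  simp only [Nat.cast_zero, mul_zero, zero_mul, zero_smul, add_zero, Nat.sub_self]
  rw [← Finset.sum_add_distrib]
  apply Finset.sum_eq_zero
  intro k hk
  have hkp : k < p := Finset.mem_range.mp hk
  obtain ⟨e, he⟩ : ∃ e, p - k = e + 1 := ⟨p - k - 1, by omega⟩
  have h1 : 2*(k+1) - 1 = 2*k+1 := by omega
  have h2 : p - (k+1) = p - k - 1 := by omega
  have h3 : p - k - 1 = e := by omega
  rw [h1, h2, h3, he, ← add_smul]
  convert zero_smul ℂ _
  have hch : ((p.choose (k+1) : ℕ) : ℂ) * ((k:ℂ)+1) = ((p.choose k : ℕ) : ℂ) * ((e:ℂ)+1) := by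
    have := Nat.choose_succ_right_eq p k
    have hcast : ((p.choose (k+1) * (k+1) : ℕ) : ℂ) = ((p.choose k * (p - k) : ℕ) : ℂ) := by
      exact_mod_cast congrArg (Nat.cast (R := ℂ)) this
    rw [he] at hcast
    push_cast at hcast
    linear_combination hcast
  simp only [coef, h2, h3, he]
  push_cast
  linear_combination (2*m*(-(2*m))^e) * hch

lemma Hu_zero (p : ℕ) (hd : d = (p:ℂ) - 3/2) :
    ρ.H (∑ k ∈ Finset.range (p+1), coef m p k • ρ.w (2*k) (p-k)) = 0 := by
  rw [map_sum]
  have hterm : ∀ k, ρ.H (coef m p k • ρ.w (2*k) (p-k))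
      = ((((p-k:ℕ):ℂ))*(((p-k:ℕ):ℂ)-1-d+2*k) * coef m p k) • ρ.w (2*k) (p-k-1)
        + ((2*(k:ℂ))*(2*(k:ℂ)-1)/2*m * coef m p k) • ρ.w (2*k-2) (p-k) := by
    intro k
    rw [map_smul, H_w, smul_add, smul_smul, smul_smul]
    match_scalars <;> push_cast <;> ring
  rw [Finset.sum_congr rfl fun k _ => hterm k, Finset.sum_add_distrib,
    Finset.sum_range_succ
      (fun k => ((((p-k:ℕ):ℂ))*(((p-k:ℕ):ℂ)-1-d+2*k) * coef m p k) • ρ.w (2*k) (p-k-1)) p,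
    Finset.sum_range_succ'
      (fun k => ((2*(k:ℂ))*(2*(k:ℂ)-1)/2*m * coef m p k) • ρ.w (2*k-2) (p-k)) p]
  simp only [Nat.cast_zero, mul_zero, zero_mul, zero_smul, add_zero, Nat.sub_self,
    zero_div, zero_sub, Nat.cast_ofNat, zero_smul]
  rw [← Finset.sum_add_distrib]
  apply Finset.sum_eq_zero
  intro k hk
  have hkp : k < p := Finset.mem_range.mp hk
  obtain ⟨e, he⟩ : ∃ e, p - k = e + 1 := ⟨p - k - 1, by omega⟩
  have h1 : 2*(k+1) - 2 = 2*k := by omega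
  have h2 : p - (k+1) = e := by omega
  have h3 : p - k - 1 = e := by omega
  have hpke : p = k + e + 1 := by omega
  rw [h1, h2, h3, he, ← add_smul]
  convert zero_smul ℂ _
  have hch : ((p.choose (k+1) : ℕ) : ℂ) * ((k:ℂ)+1) = ((p.choose k : ℕ) : ℂ) * ((e:ℂ)+1) := by
    have := Nat.choose_succ_right_eq p k
    have hcast : ((p.choose (k+1) * (k+1) : ℕ) : ℂ) = ((p.choose k * (p - k) : ℕ) : ℂ) := by
      exact_mod_cast congrArg (Nat.cast (R := ℂ)) this
    rw [he] at hcast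
    push_cast at hcast
    linear_combination hcast
  have hpc : (p:ℂ) = (k:ℂ) + (e:ℂ) + 1 := by exact_mod_cast congrArg (Nat.cast (R := ℂ)) hpke
  simp only [coef, h2, he, hd]
  push_cast
  rw [hpc]
  linear_combination (-(2*m))^e * m * (2*(k:ℂ)+1) * hch

/-- existence, massive case -/
lemma singular_u (p : ℕ) (hp : 1 ≤ p) (hd : d = (p:ℂ) - 3/2) :
    ρ.IsSingular (((ρ.G * ρ.G - (2*m) • ρ.K) ^ p) ρ.w0) := by
  refine ⟨⟨2*(p:ℂ) - d, ?_⟩, ?_, ?_, ?_⟩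
  · rw [u_eq, map_sum, Finset.smul_sum]
    refine Finset.sum_congr rfl fun k hk => ?_
    have hkp : k < p + 1 := Finset.mem_range.mp hk
    rw [map_smul, D_w, smul_smul, smul_smul]
    have hc : ((p - k : ℕ) : ℂ) = (p:ℂ) - (k:ℂ) := by
      push_cast [Nat.cast_sub (by omega : k ≤ p)]
      ring
    match_scalars
    rw [hc]
    push_cast
    ring
  · intro c hc
    have h := congrArg (fun u => ρ.basis.repr u (2*p, 0)) hc
    rw [repr_u_top, map_smul, show ρ.w0 = ρ.w 0 0 from ρ.w00.symm, repr_w,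
      Finsupp.smul_apply, Finsupp.single_apply,
      if_neg (by simp only [Prod.mk.injEq]; intro ⟨hh, _⟩; omega), smul_eq_mul, mul_zero] at h
    exact one_ne_zero h
  · rw [u_eq]; exact ρ.Pu_zero p
  · rw [u_eq]; exact ρ.Hu_zero p hd

end Sch1Verma
namespace Sch1Verma

variable {d m : ℂ} {V : Type*} [AddCommGroup V] [Module ℂ V] (ρ : Sch1Verma d m V)

lemma singular_unique (hm : m ≠ 0) (p : ℕ) (hp : 1 ≤ p) (hd : d = (p:ℂ) - 3/2)
    {v : V} (hv : ρ.IsSingular v) :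
    ∃ c : ℂ, v = c • ((ρ.G * ρ.G - (2*m) • ρ.K) ^ p) ρ.w0 := by
  have hu := ρ.singular_u p hp hd
  obtain ⟨p', hp', hd', hvne, hvc, hvz⟩ := ρ.singular_mne hm hv
  obtain ⟨p'', hp'', hd'', hune, huc, huz⟩ := ρ.singular_mne hm hu
  have hpp' : p' = p := by
    have h : ((p':ℕ):ℂ) = ((p:ℕ):ℂ) := by linear_combination hd - hd'
    exact_mod_cast h
  have hpp'' : p'' = p := by
    have h : ((p'':ℕ):ℂ) = ((p:ℕ):ℂ) := by linear_combination hd - hd''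
    exact_mod_cast h
  rw [hpp'] at hvne hvc hvz
  rw [hpp''] at huc huz
  have hut := ρ.repr_u_top p
  refine ⟨ρ.basis.repr v (2*p, 0), ?_⟩
  apply ρ.basis.repr.injective
  rw [map_smul]
  ext j
  rw [Finsupp.smul_apply, smul_eq_mul]
  by_cases hj : j.1 + 2*j.2 = 2*p
  · rw [hvc j hj, huc j hj, hut]
    ring
  · rw [hvz j hj, huz j hj, mul_zero]

end Sch1Verma

theorem statement0' {d m : ℂ} {V : Type*} [AddCommGroup V] [Module ℂ V]
    (ρ : Sch1Verma d m V) :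
    (m ≠ 0 →
      (((∃ v, ρ.IsSingular v) ↔ ∃ p : ℕ, 1 ≤ p ∧ d = (p : ℂ) - 3/2) ∧
        (∀ p : ℕ, 1 ≤ p → d = (p : ℂ) - 3/2 →
          ρ.IsSingular (((ρ.G * ρ.G - (2 * m) • ρ.K) ^ p) ρ.w0) ∧
          ∀ v, ρ.IsSingular v →
            ∃ c : ℂ, v = c • ((ρ.G * ρ.G - (2 * m) • ρ.K) ^ p) ρ.w0))) ∧
    (m = 0 →
      ((∀ p : ℕ, 1 ≤ p → ρ.IsSingular ((ρ.G ^ p) ρ.w0)) ∧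
        (∀ v, ρ.IsSingular v → ∃ p : ℕ, 1 ≤ p ∧ ∃ c : ℂ, v = c • (ρ.G ^ p) ρ.w0))) := by
  constructor
  · intro hm
    refine ⟨⟨?_, ?_⟩, ?_⟩
    · rintro ⟨v, hv⟩
      obtain ⟨p, hp, hd', -, -, -⟩ := ρ.singular_mne hm hv
      exact ⟨p, hp, hd'⟩
    · rintro ⟨p, hp, hd'⟩
      exact ⟨_, ρ.singular_u p hp hd'⟩
    · intro p hp hd'
      exact ⟨ρ.singular_u p hp hd', fun v hv => ρ.singular_unique hm p hp hd' hv⟩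
  · intro hm
    exact ⟨fun p hp => ρ.singular_Gp hm p hp, fun v hv => ρ.singular_m0 hm hv⟩
/-- For `m ≠ 0` the Verma module over sch(1) of weight `d` and mass `m`
has a singular vector iff `d = p - 3/2` for some `p ∈ ℕ = {1,2,...}`; in that case the
singular vector is unique up to scalar multiple and equals `(G² - 2mK)^p w₀`.
For `m = 0` every `G^p w₀` (`p ≥ 1`) is a singular vector, and every singular vector is a
scalar multiple of some `G^p w₀`. -/
theorem statement0 {d m : ℂ} {V : Type*} [AddCommGroup V] [Module ℂ V]
    (ρ : Sch1Verma d m V) :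
    (m ≠ 0 →
      (((∃ v, ρ.IsSingular v) ↔ ∃ p : ℕ, 1 ≤ p ∧ d = (p : ℂ) - 3/2) ∧
        (∀ p : ℕ, 1 ≤ p → d = (p : ℂ) - 3/2 →
          ρ.IsSingular (((ρ.G * ρ.G - (2 * m) • ρ.K) ^ p) ρ.w0) ∧
          ∀ v, ρ.IsSingular v →
            ∃ c : ℂ, v = c • ((ρ.G * ρ.G - (2 * m) • ρ.K) ^ p) ρ.w0))) ∧
    (m = 0 →
      ((∀ p : ℕ, 1 ≤ p → ρ.IsSingular ((ρ.G ^ p) ρ.w0)) ∧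
        (∀ v, ρ.IsSingular v → ∃ p : ℕ, 1 ≤ p ∧ ∃ c : ℂ, v = c • (ρ.G ^ p) ρ.w0))) := by
  exact statement0' ρ
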